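/- For all graphs G1 and G2 on the same vertex set, the union G1 ∪ G2 contains no clique on tw(G1) + tw(G2) + 3 vertices. -/

import Mathlib

open SimpleGraph

/-- A tree decomposition of a graph `G`. -/
structure TreeDecomp {V : Type} (G : SimpleGraph V) where
  ι : Type
  T : SimpleGraph ι
  conn : T.Connected
  acyclic : T.IsAcyclic
  bag : ι → Finset V
  cover : ∀ v : V, ∃ i, v ∈ bag i
  edge_cover : ∀ ⦃u v : V⦄, G.Adj u v → ∃ i, u ∈ bag i ∧ v ∈ bag i
  bag_conn : ∀ v : V, (T.induce {i | v ∈ bag i}).Connected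

/-- The treewidth of `G`: minimum over tree decompositions of max bag size minus one. -/
noncomputable def treewidth {V : Type} (G : SimpleGraph V) : ℕ :=
  sInf {k | ∃ D : TreeDecomp G, ∀ i, (D.bag i).card ≤ k + 1}

/-- `G` is a `k`-tree: there is a construction ordering starting from a `(k+1)`-clique,
each later vertex being adjacent exactly to a `k`-clique of earlier vertices. -/
def IsKTree {V : Type} (k : ℕ) (G : SimpleGraph V) : Prop :=
  ∃ (n : ℕ) (e : V ≃ Fin n), k + 1 ≤ n ∧
    (∀ i j : Fin n, i < j → (j : ℕ) < k + 1 → G.Adj (e.symm i) (e.symm j)) ∧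
    ∀ j : Fin n, k + 1 ≤ (j : ℕ) →
      ∃ C : Finset V, G.IsNClique k C ∧ (∀ x ∈ C, ((e x : ℕ) < (j : ℕ))) ∧
        ∀ i : Fin n, i < j → (G.Adj (e.symm i) (e.symm j) ↔ e.symm i ∈ C)

/-- `G` has four vertices inducing a 4-cycle. -/
def HasInducedC4 {V : Type} (G : SimpleGraph V) : Prop :=
  ∃ a b c d : V, a ≠ c ∧ b ≠ d ∧
    G.Adj a b ∧ G.Adj b c ∧ G.Adj c d ∧ G.Adj d a ∧ ¬ G.Adj a c ∧ ¬ G.Adj b d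

/-- Two vertex sets touch in `G`: they intersect or an edge of `G` joins them. -/
def Touch {V : Type} (G : SimpleGraph V) (A B : Set V) : Prop :=
  (A ∩ B).Nonempty ∨ ∃ a ∈ A, ∃ b ∈ B, G.Adj a b

/-- A bramble in `G`: a family of connected, pairwise touching vertex sets. -/
def IsBramble {V : Type} (G : SimpleGraph V) (𝓑 : Set (Set V)) : Prop :=
  (∀ A ∈ 𝓑, (G.induce A).Connected) ∧ ∀ A ∈ 𝓑, ∀ B ∈ 𝓑, Touch G A B

/-- `S` is a hitting set of the bramble `𝓑`. -/
def IsHittingSet {V : Type} (𝓑 : Set (Set V)) (S : Set V) : Prop :=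
  ∀ A ∈ 𝓑, (A ∩ S).Nonempty

/-- The split graph `Q_n^k`: a `k`-clique (the vertices `< k`) with `n - k` further
vertices adjacent exactly to the clique. -/
def QGraph (n k : ℕ) : SimpleGraph (Fin n) where
  Adj i j := i ≠ j ∧ ((i : ℕ) < k ∨ (j : ℕ) < k)
  symm := ⟨by intro i j h; exact ⟨h.1.symm, h.2.symm⟩⟩
  loopless := ⟨by intro i h; exact h.1 rfl⟩


namespace UnionCliqueFreeAux

variable {ι : Type} {T : SimpleGraph ι}

/-- `A` induces a connected subgraph of `T`. -/
def IConn (T : SimpleGraph ι) (A : Set ι) : Prop := (T.induce A).Connected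

lemma iconn_nonempty {A : Set ι} (h : IConn T A) : A.Nonempty := by
  obtain ⟨⟨a, ha⟩⟩ := ((connected_iff _).mp h).2
  exact ⟨a, ha⟩

lemma exists_walk_in' {A : Set ι} {u v : {z // z ∈ A}} (w : (T.induce A).Walk u v) :
    ∃ w' : T.Walk u.1 v.1, ∀ z ∈ w'.support, z ∈ A := by
  induction w with
  | @nil u =>
      refine ⟨Walk.nil, fun z hz => ?_⟩
      rw [Walk.support_nil, List.mem_singleton] at hz
      subst hz; exact u.2
  | @cons u m v h p ih =>
      obtain ⟨w', hw'⟩ := ih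
      refine ⟨Walk.cons h w', fun z hz => ?_⟩
      change z ∈ (u.1 :: w'.support) at hz
      rcases List.mem_cons.mp hz with rfl | hz
      · exact u.2
      · exact hw' z hz

lemma exists_walk_in {A : Set ι} (h : IConn T A) {x y : ι} (hx : x ∈ A) (hy : y ∈ A) :
    ∃ w : T.Walk x y, ∀ z ∈ w.support, z ∈ A := by
  obtain ⟨w⟩ := h.preconnected ⟨x, hx⟩ ⟨y, hy⟩
  exact exists_walk_in' w

lemma reachable_in {A : Set ι} {x y : ι} (w : T.Walk x y) :
    (∀ z ∈ w.support, z ∈ A) → ∀ (hx : x ∈ A) (hy : y ∈ A),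
      (T.induce A).Reachable ⟨x, hx⟩ ⟨y, hy⟩ := by
  induction w with
  | nil => intro _ hx hy; exact Reachable.refl _
  | @cons u m y h p ih =>
      intro hsup hx hy
      have hm : m ∈ A := hsup m (by
        rw [Walk.support_cons]; exact List.mem_cons_of_mem _ p.start_mem_support)
      have hadj : (T.induce A).Adj ⟨u, hx⟩ ⟨m, hm⟩ := h
      exact hadj.reachable.trans (ih (fun z hz => hsup z (by
        rw [Walk.support_cons]; exact List.mem_cons_of_mem _ hz)) hm hy)

lemma iconn_of_walks {A : Set ι} (hne : A.Nonempty)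
    (h : ∀ x ∈ A, ∀ y ∈ A, ∃ w : T.Walk x y, ∀ z ∈ w.support, z ∈ A) : IConn T A := by
  obtain ⟨a, ha⟩ := hne
  have : Nonempty {z // z ∈ A} := ⟨⟨a, ha⟩⟩
  constructor
  intro u v
  obtain ⟨w, hw⟩ := h u.1 u.2 v.1 v.2
  exact reachable_in w hw u.2 v.2

lemma path_in_inter (hac : T.IsAcyclic) {A B : Set ι} (hA : IConn T A) (hB : IConn T B)
    {x y : ι} (hxA : x ∈ A) (hyA : y ∈ A) (hxB : x ∈ B) (hyB : y ∈ B) :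
    ∃ w : T.Walk x y, ∀ z ∈ w.support, z ∈ A ∩ B := by
  classical
  obtain ⟨wa, hwa⟩ := exists_walk_in hA hxA hyA
  obtain ⟨wb, hwb⟩ := exists_walk_in hB hxB hyB
  have h1 : wa.toPath = wb.toPath := isAcyclic_iff_path_unique.mp hac _ _
  refine ⟨(wa.toPath : T.Walk x y), fun z hz => ?_⟩
  refine ⟨hwa z (wa.support_toPath_subset hz), ?_⟩
  have hz' : z ∈ (wb.toPath : T.Walk x y).support := by rw [← h1]; exact hz
  exact hwb z (wb.support_toPath_subset hz')

lemma iconn_inter (hac : T.IsAcyclic) {A B : Set ι} (hA : IConn T A) (hB : IConn T B)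
    (hne : (A ∩ B).Nonempty) : IConn T (A ∩ B) :=
  iconn_of_walks hne (fun x hx y hy => path_in_inter hac hA hB hx.1 hy.1 hx.2 hy.2)

lemma iconn_union {A B : Set ι} (hA : IConn T A) (hB : IConn T B)
    (hne : (A ∩ B).Nonempty) : IConn T (A ∪ B) := by
  obtain ⟨c, hcA, hcB⟩ := hne
  apply iconn_of_walks ⟨c, Or.inl hcA⟩
  have key : ∀ x ∈ A ∪ B, ∃ w : T.Walk x c, ∀ z ∈ w.support, z ∈ A ∪ B := by
    intro x hx
    rcases hx with hx | hx
    · obtain ⟨w, hw⟩ := exists_walk_in hA hx hcA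
      exact ⟨w, fun z hz => Or.inl (hw z hz)⟩
    · obtain ⟨w, hw⟩ := exists_walk_in hB hx hcB
      exact ⟨w, fun z hz => Or.inr (hw z hz)⟩
  intro x hx y hy
  obtain ⟨w1, h1⟩ := key x hx
  obtain ⟨w2, h2⟩ := key y hy
  refine ⟨w1.append w2.reverse, fun z hz => ?_⟩
  rw [Walk.mem_support_append_iff] at hz
  rcases hz with hz | hz
  · exact h1 z hz
  · exact h2 z (by rwa [Walk.support_reverse, List.mem_reverse] at hz)

lemma exists_boundary {S1 : Set ι} {a b : ι} (w : T.Walk a b) :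
    w.IsPath → a ∈ S1 → b ∉ S1 →
      ∃ x y, T.Adj x y ∧ x ∈ S1 ∧ y ∉ S1 ∧ ∃ w' : T.Walk y b, x ∉ w'.support := by
  induction w with
  | nil => intro _ ha hb; exact absurd ha hb
  | @cons u m b h p ih =>
      intro hp ha hb
      by_cases hm : m ∈ S1
      · exact ih hp.of_cons hm hb
      · exact ⟨u, m, h, ha, hm, p, ((Walk.cons_isPath_iff h p).mp hp).2⟩

lemma separation (hconn : T.Connected) (hac : T.IsAcyclic) {S1 S2 : Set ι}
    (h1 : IConn T S1) (h2 : IConn T S2) (hdis : S1 ∩ S2 = ∅) :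
    ∃ x y : ι, x ∈ S1 ∧ y ∉ S1 ∧
      ∀ D : Set ι, IConn T D → (D ∩ S1).Nonempty → (D ∩ S2).Nonempty → x ∈ D ∧ y ∈ D := by
  classical
  have hdis' : ∀ z, z ∈ S1 → z ∈ S2 → False := by
    intro z h1' h2'
    rw [Set.eq_empty_iff_forall_notMem] at hdis
    exact hdis z ⟨h1', h2'⟩
  obtain ⟨a, ha⟩ := iconn_nonempty h1
  obtain ⟨b, hb⟩ := iconn_nonempty h2
  have hbn : b ∉ S1 := fun hbS1 => hdis' b hbS1 hb
  obtain ⟨w0⟩ := hconn a b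
  obtain ⟨x, y, hxy, hxS1, hyS1, w', hw'x⟩ :=
    exists_boundary (w0.toPath : T.Walk a b) w0.toPath.2 ha hbn
  have hbridge : ¬(T \ fromEdgeSet {s(x, y)}).Reachable x y :=
    isBridge_iff.mp (isAcyclic_iff_forall_adj_isBridge.mp hac hxy)
  refine ⟨x, y, hxS1, hyS1, ?_⟩
  rintro D hD ⟨c1, hc1D, hc1S1⟩ ⟨c2, hc2D, hc2S2⟩
  obtain ⟨wD, hwD⟩ := exists_walk_in hD hc1D hc2D
  have hedge : s(x, y) ∈ wD.edges := by
    by_contra hne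
    obtain ⟨w1, hw1⟩ := exists_walk_in h1 hc1S1 hxS1
    obtain ⟨w2, hw2⟩ := exists_walk_in h2 hc2S2 hb
    have hw1e : s(x, y) ∉ w1.edges := fun he =>
      hyS1 (hw1 y (w1.snd_mem_support_of_mem_edges he))
    have hw2e : s(x, y) ∉ w2.edges := fun he =>
      hdis' x hxS1 (hw2 x (w2.fst_mem_support_of_mem_edges he))
    have hw'e : s(x, y) ∉ w'.edges := fun he =>
      hw'x (w'.fst_mem_support_of_mem_edges he)
    apply hbridge
    refine reachable_deleteEdges_iff_exists_walk.mpr ?_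
    refine ⟨w1.reverse.append (wD.append (w2.append w'.reverse)), ?_⟩
    intro hmem
    simp only [Walk.edges_append, Walk.edges_reverse, List.mem_append, List.mem_reverse] at hmem
    rcases hmem with h' | ((h' | (h' | h'))) 
    · exact hw1e h'
    · exact hne h'
    · exact hw2e h'
    · exact hw'e h'
  exact ⟨hwD x (wD.fst_mem_support_of_mem_edges hedge),
    hwD y (wD.snd_mem_support_of_mem_edges hedge)⟩

lemma three_inter (hconn : T.Connected) (hac : T.IsAcyclic) {A B C : Set ι}
    (hA : IConn T A) (hB : IConn T B) (hC : IConn T C)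
    (hAB : (A ∩ B).Nonempty) (hAC : (A ∩ C).Nonempty) (hBC : (B ∩ C).Nonempty) :
    (A ∩ B ∩ C).Nonempty := by
  by_contra hempty
  rw [Set.not_nonempty_iff_eq_empty] at hempty
  obtain ⟨x, y, hxS1, hyS1, key⟩ := separation hconn hac (iconn_inter hac hA hB hAB) hC hempty
  obtain ⟨z, hzA, hzB⟩ := hAB
  have hAres := key A hA ⟨z, hzA, hzA, hzB⟩ hAC
  have hBres := key B hB ⟨z, hzB, hzA, hzB⟩ hBC
  exact hyS1 ⟨hAres.2, hBres.2⟩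

lemma helly {α : Type} (hconn : T.Connected) (hac : T.IsAcyclic) (s : Finset α) :
    ∀ (f : α → Set ι), s.Nonempty → (∀ a ∈ s, IConn T (f a)) →
      (∀ a ∈ s, ∀ b ∈ s, (f a ∩ f b).Nonempty) → ∃ z, ∀ a ∈ s, z ∈ f a := by
  classical
  induction s using Finset.induction_on with
  | empty => intro f h; exact absurd h (by simp)
  | @insert a t hat ih =>
      intro f _ hconnf hpair
      rcases t.eq_empty_or_nonempty with rfl | htne
      · obtain ⟨z, hz, _⟩ := hpair a (by simp) a (by simp)
        refine ⟨z, fun b hb => ?_⟩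
        rcases Finset.mem_insert.mp hb with rfl | hb
        · exact hz
        · exact absurd hb (Finset.notMem_empty b)
      · have hconn' : ∀ b ∈ t, IConn T (f b ∩ f a) := fun b hb =>
          iconn_inter hac (hconnf b (Finset.mem_insert_of_mem hb))
            (hconnf a (Finset.mem_insert_self a t))
            (hpair b (Finset.mem_insert_of_mem hb) a (Finset.mem_insert_self a t))
        have hpair' : ∀ b ∈ t, ∀ c ∈ t, ((f b ∩ f a) ∩ (f c ∩ f a)).Nonempty := by
          intro b hb c hc
          obtain ⟨z, hz⟩ := three_inter hconn hac
            (hconnf b (Finset.mem_insert_of_mem hb))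
            (hconnf c (Finset.mem_insert_of_mem hc))
            (hconnf a (Finset.mem_insert_self a t))
            (hpair b (Finset.mem_insert_of_mem hb) c (Finset.mem_insert_of_mem hc))
            (hpair b (Finset.mem_insert_of_mem hb) a (Finset.mem_insert_self a t))
            (hpair c (Finset.mem_insert_of_mem hc) a (Finset.mem_insert_self a t))
          exact ⟨z, ⟨hz.1.1, hz.2⟩, ⟨hz.1.2, hz.2⟩⟩
        obtain ⟨z, hz⟩ := ih (fun b => f b ∩ f a) htne hconn' hpair'
        refine ⟨z, fun b hb => ?_⟩
        rcases Finset.mem_insert.mp hb with rfl | hb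
        · obtain ⟨c, hc⟩ := htne; exact (hz c hc).2
        · exact (hz b hb).1

end UnionCliqueFreeAux

/-- The trivial tree decomposition with a single bag containing everything. -/
def trivialDecomp {V : Type} [Fintype V] (G : SimpleGraph V) : TreeDecomp G where
  ι := Unit
  T := ⊥
  conn := by
    have : Nonempty Unit := ⟨()⟩
    constructor
    intro u v
    rw [Subsingleton.elim u v]
  acyclic := by
    intro v c hc
    cases c with
    | nil => exact hc.ne_nil rfl
    | cons h p => simp at h
  bag := fun _ => Finset.univ
  cover := fun v => ⟨(), Finset.mem_univ v⟩
  edge_cover := fun u v _ => ⟨(), Finset.mem_univ u, Finset.mem_univ v⟩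
  bag_conn := by
    intro v
    have : Nonempty {i : Unit // i ∈ {i | v ∈ (Finset.univ : Finset V)}} :=
      ⟨⟨(), Finset.mem_univ v⟩⟩
    constructor
    intro a b
    rw [Subsingleton.elim a b]

lemma treewidth_spec {V : Type} [Fintype V] (G : SimpleGraph V) :
    ∃ D : TreeDecomp G, ∀ i, (D.bag i).card ≤ treewidth G + 1 := by
  have hne : {k | ∃ D : TreeDecomp G, ∀ i, (D.bag i).card ≤ k + 1}.Nonempty :=
    ⟨Fintype.card V, trivialDecomp G, fun _ =>
      le_trans (Finset.card_le_univ _) (by simp [Finset.card_univ])⟩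
  exact Nat.sInf_mem hne

open UnionCliqueFreeAux in
theorem union_cliqueFree {V : Type} [Fintype V] (G1 G2 : SimpleGraph V) :
    (G1 ⊔ G2).CliqueFree (treewidth G1 + treewidth G2 + 3) := by
  classical
  intro s hs
  obtain ⟨D1, hD1⟩ := treewidth_spec G1
  obtain ⟨D2, hD2⟩ := treewidth_spec G2
  set R : V → Set D1.ι := fun v => {i | v ∈ D1.bag i} with hR
  set S : V → Set D2.ι := fun v => {i | v ∈ D2.bag i} with hS
  have hRconn : ∀ v, IConn D1.T (R v) := D1.bag_conn
  have hSconn : ∀ v, IConn D2.T (S v) := D2.bag_conn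
  have hRne : ∀ v, (R v).Nonempty := fun v => D1.cover v
  have hSne : ∀ v, (S v).Nonempty := fun v => D2.cover v
  have hcover : ∀ u ∈ s, ∀ w ∈ s, u ≠ w →
      (R u ∩ R w).Nonempty ∨ (S u ∩ S w).Nonempty := by
    intro u hu w hw huw
    have hadj := hs.1 (Finset.mem_coe.mpr hu) (Finset.mem_coe.mpr hw) huw
    rw [SimpleGraph.sup_adj] at hadj
    rcases hadj with h | h
    · obtain ⟨i, hi1, hi2⟩ := D1.edge_cover h
      exact Or.inl ⟨i, hi1, hi2⟩
    · obtain ⟨i, hi1, hi2⟩ := D2.edge_cover h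
      exact Or.inr ⟨i, hi1, hi2⟩
  set Q : Finset (V × V) := (s ×ˢ s).filter
    (fun p => (R p.1 ∩ R p.2).Nonempty ∧ (S p.1 ∩ S p.2) = ∅) with hQ
  have hQmem : ∀ p ∈ Q, p.1 ∈ s ∧ p.2 ∈ s ∧ (R p.1 ∩ R p.2).Nonempty ∧
      S p.1 ∩ S p.2 = ∅ := by
    intro p hp
    rw [hQ, Finset.mem_filter, Finset.mem_product] at hp
    exact ⟨hp.1.1, hp.1.2, hp.2.1, hp.2.2⟩
  have ht1 : ∃ t1 : D1.ι, ∀ p ∈ Q, t1 ∈ R p.1 ∪ R p.2 := by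
    rcases Q.eq_empty_or_nonempty with hQe | hQne
    · obtain ⟨v0, hv0⟩ := Finset.card_pos.mp (by rw [hs.2]; omega)
      obtain ⟨i, _⟩ := hRne v0
      refine ⟨i, fun p hp => ?_⟩
      rw [hQe] at hp
      exact absurd hp (Finset.notMem_empty p)
    · have hWconn : ∀ p ∈ Q, IConn D1.T (R p.1 ∪ R p.2) := fun p hp =>
        iconn_union (hRconn _) (hRconn _) (hQmem p hp).2.2.1
      have hWpair : ∀ p ∈ Q, ∀ q ∈ Q,
          ((R p.1 ∪ R p.2) ∩ (R q.1 ∪ R q.2)).Nonempty := by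
        intro p hp q hq
        by_contra hE
        rw [Set.not_nonempty_iff_eq_empty] at hE
        have empt : ∀ u w : V, R u ⊆ R p.1 ∪ R p.2 → R w ⊆ R q.1 ∪ R q.2 →
            R u ∩ R w = ∅ := by
          intro u w hu hw
          rw [Set.eq_empty_iff_forall_notMem]
          intro z hz
          have : z ∈ (R p.1 ∪ R p.2) ∩ (R q.1 ∪ R q.2) := ⟨hu hz.1, hw hz.2⟩
          rw [hE] at this
          exact this
        have scross : ∀ u w, u ∈ s → w ∈ s → R u ∩ R w = ∅ →
            (S u ∩ S w).Nonempty := by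
          intro u w hu hw hRe
          have hne : u ≠ w := by
            rintro rfl
            obtain ⟨i, hi⟩ := hRne u
            rw [Set.eq_empty_iff_forall_notMem] at hRe
            exact hRe i ⟨hi, hi⟩
          rcases hcover u hu w hw hne with h | h
          · rw [hRe] at h
            exact absurd h Set.not_nonempty_empty
          · exact h
        obtain ⟨hp1, hp2, _, hpS⟩ := hQmem p hp
        obtain ⟨hq1, hq2, _, hqS⟩ := hQmem q hq
        obtain ⟨x, y, hxS1, hyS1, key⟩ :=
          separation D2.conn D2.acyclic (hSconn p.1) (hSconn p.2) hpS
        have e11 := empt p.1 q.1 Set.subset_union_left Set.subset_union_left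
        have e12 := empt p.2 q.1 Set.subset_union_right Set.subset_union_left
        have e21 := empt p.1 q.2 Set.subset_union_left Set.subset_union_right
        have e22 := empt p.2 q.2 Set.subset_union_right Set.subset_union_right
        have s11 := scross p.1 q.1 hp1 hq1 e11
        have s12 := scross p.2 q.1 hp2 hq1 e12
        have s21 := scross p.1 q.2 hp1 hq2 e21
        have s22 := scross p.2 q.2 hp2 hq2 e22
        have hkey1 := key (S q.1) (hSconn q.1)
          (by rwa [Set.inter_comm] at s11) (by rwa [Set.inter_comm] at s12)
        have hkey2 := key (S q.2) (hSconn q.2)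
          (by rwa [Set.inter_comm] at s21) (by rwa [Set.inter_comm] at s22)
        have : x ∈ S q.1 ∩ S q.2 := ⟨hkey1.1, hkey2.1⟩
        rw [hqS] at this
        exact this
      exact helly D1.conn D1.acyclic Q (fun p => R p.1 ∪ R p.2) hQne hWconn hWpair
  obtain ⟨t1, ht1⟩ := ht1
  set s1 := s.filter (fun v => t1 ∈ R v) with hs1def
  set s2 := s.filter (fun v => t1 ∉ R v) with hs2def
  have hcard1 : s1.card ≤ treewidth G1 + 1 := by
    have hsub : s1 ⊆ D1.bag t1 := by
      intro v hv
      have := (Finset.mem_filter.mp hv).2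
      exact this
    exact le_trans (Finset.card_le_card hsub) (hD1 t1)
  have hcard2 : s2.card ≤ treewidth G2 + 1 := by
    rcases s2.eq_empty_or_nonempty with h | hs2ne
    · rw [h]
      simp
    · have hconn' : ∀ v ∈ s2, IConn D2.T (S v) := fun v _ => hSconn v
      have hpair' : ∀ u ∈ s2, ∀ w ∈ s2, (S u ∩ S w).Nonempty := by
        intro u hu w hw
        rw [hs2def, Finset.mem_filter] at hu hw
        by_cases huw : u = w
        · subst huw
          obtain ⟨i, hi⟩ := hSne u
          exact ⟨i, hi, hi⟩
        · by_cases hSe : (S u ∩ S w) = ∅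
          · rcases hcover u hu.1 w hw.1 huw with h | h
            · have hmemQ : (u, w) ∈ Q := by
                rw [hQ, Finset.mem_filter, Finset.mem_product]
                exact ⟨⟨hu.1, hw.1⟩, h, hSe⟩
              have := ht1 (u, w) hmemQ
              rw [Set.mem_union] at this
              rcases this with ht | ht
              · exact absurd ht hu.2
              · exact absurd ht hw.2
            · rw [hSe] at h
              exact absurd h Set.not_nonempty_empty
          · exact Set.nonempty_iff_ne_empty.mpr hSe
      obtain ⟨t2, ht2⟩ := helly D2.conn D2.acyclic s2 S hs2ne hconn' hpair'
      have hsub : s2 ⊆ D2.bag t2 := fun v hv => ht2 v hv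
      exact le_trans (Finset.card_le_card hsub) (hD2 t2)
  have hsplit : s1.card + s2.card = s.card := by
    rw [hs1def, hs2def]
    exact Finset.card_filter_add_card_filter_not (p := fun v => t1 ∈ R v)
  rw [hs.2] at hsplit
  omega
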